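/- (Theorem 1, multi-spike case: an EF neuron performs the computation of a ReLU analog neuron and encodes the result in its output LTC spike train.) Let e⁰_min ≤ e⁰_max and E_min ≤ E_max be integers with T_in = e⁰_max − e⁰_min + 1 and T_out = E_max − E_min + 1. Let ι be a finite index set, w : ι → ℝ, and for each i ∈ ι let F i be a finite set of natural numbers contained in {0, …, T_in − 1}. Define the input current I : ℕ → ℝ by I k = Σ_{i ∈ ι, k ∈ F i} w i, and define u : ℕ → ℝ and s : ℕ → Bool by u 0 = 2^{e⁰_min} · I 0, s k = (u k ≥ 2^{E_max}), and u (k+1) = 2 · (u k − (if s k then 2^{E_max} else 0)) + 2^{e⁰_min} · I (k+1). Assume s k = false for all k < T_in − 1 (no output spike before the output time window). Then Σ_{k = T_in − 1}^{T_in + T_out − 2} (if s k then 2^{E_max − (k − (T_in − 1))} else 0) = MLA(max(Σ_{i ∈ ι} w i · ã_i, 0)), where ã_i = Σ_{t ∈ F i} 2^{e⁰_max − t} and MLA is the multi-power logarithmic approximation with exponent range {E_min, …, E_max}. -/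

import Mathlib

/-- The multi-power logarithmic approximation of a real number `a ≥ 0`
with exponent range `{emin, …, emax}`. -/
noncomputable def MLA (emin emax : ℤ) (a : ℝ) : ℝ :=
  if a < (2:ℝ)^emin then 0
  else if a < (2:ℝ)^(emax+1) then (⌊a / (2:ℝ)^emin⌋ : ℝ) * (2:ℝ)^emin
  else (2:ℝ)^(emax+1) - (2:ℝ)^emin

/-- Theorem 1, multi-spike case: a multi-spike EF neuron performs the
computation of an analog ReLU neuron and encodes the result in its output
LTC spike train within its output time window, provided all input spikes
arrive within the input time window and no output spike is fired before the
beginning of the output time window. -/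
theorem EF_neuron_computes_ReLU
    (e0min e0max Emin Emax : ℤ) (h0 : e0min ≤ e0max) (hE : Emin ≤ Emax)
    (Tin Tout : ℕ)
    (hTin : (Tin : ℤ) = e0max - e0min + 1)
    (hTout : (Tout : ℤ) = Emax - Emin + 1)
    (ι : Type*) [Fintype ι] (w : ι → ℝ) (F : ι → Finset ℕ)
    (hF : ∀ i, F i ⊆ Finset.range Tin)
    (I : ℕ → ℝ) (hI : ∀ k, I k = ∑ i, if k ∈ F i then w i else 0)
    (u : ℕ → ℝ) (s : ℕ → Bool)
    (hu0 : u 0 = (2:ℝ)^e0min * I 0)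
    (hs : ∀ k, s k = true ↔ (2:ℝ)^Emax ≤ u k)
    (hu : ∀ k, u (k+1) =
      2 * (u k - (if s k then (2:ℝ)^Emax else 0)) + (2:ℝ)^e0min * I (k+1))
    (hearly : ∀ k, k < Tin - 1 → s k = false) :
    ∑ k ∈ Finset.Icc (Tin - 1) (Tin + Tout - 2),
        (if s k then (2:ℝ)^(Emax - ((k:ℤ) - ((Tin:ℤ) - 1))) else 0)
      = MLA Emin Emax
          (max (∑ i, w i * ∑ t ∈ F i, (2:ℝ)^(e0max - (t:ℤ))) 0) := by
  have h2 : (2:ℝ) ≠ 0 := two_ne_zero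
  have h2p : (0:ℝ) < 2 := two_pos
  have hTin1 : 1 ≤ Tin := by
    have : (1:ℤ) ≤ (Tin:ℤ) := by omega
    exact_mod_cast this
  have hTout1 : 1 ≤ Tout := by
    have : (1:ℤ) ≤ (Tout:ℤ) := by omega
    exact_mod_cast this
  set N : ℕ := Tin - 1 with hN
  have hNz : (N:ℤ) = (Tin:ℤ) - 1 := by
    rw [hN, Nat.cast_sub hTin1]; simp
  set A : ℝ := ∑ i, w i * ∑ t ∈ F i, (2:ℝ)^(e0max - (t:ℤ)) with hA
  have zadd : ∀ x y : ℤ, (2:ℝ)^(x+y) = (2:ℝ)^x * (2:ℝ)^y := fun x y => zpow_add₀ h2 x y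
  -- closed form for u
  have key : ∀ k, u k =
      (∑ j ∈ Finset.range (k+1), (2:ℝ)^e0min * I j * (2:ℝ)^((k:ℤ) - (j:ℤ)))
      - ∑ j ∈ Finset.range k, (if s j then (2:ℝ)^Emax * (2:ℝ)^((k:ℤ) - (j:ℤ)) else 0) := by
    intro k
    induction k with
    | zero => simp [hu0]
    | succ k ih =>
      have hA2 : ∑ j ∈ Finset.range (k+1+1),
          (2:ℝ)^e0min * I j * (2:ℝ)^(((k+1:ℕ):ℤ) - (j:ℤ))
          = 2 * (∑ j ∈ Finset.range (k+1), (2:ℝ)^e0min * I j * (2:ℝ)^((k:ℤ) - (j:ℤ)))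
            + (2:ℝ)^e0min * I (k+1) := by
        rw [Finset.sum_range_succ, Finset.mul_sum]
        congr 1
        · refine Finset.sum_congr rfl fun j _ => ?_
          rw [show ((k+1:ℕ):ℤ) - (j:ℤ) = ((k:ℤ) - (j:ℤ)) + 1 by push_cast; ring, zadd]
          ring
        · rw [show ((k+1:ℕ):ℤ) - ((k+1:ℕ):ℤ) = 0 by ring, zpow_zero]
          ring
      have hB2 : ∑ j ∈ Finset.range (k+1),
          (if s j then (2:ℝ)^Emax * (2:ℝ)^(((k+1:ℕ):ℤ) - (j:ℤ)) else 0)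
          = 2 * (∑ j ∈ Finset.range k, (if s j then (2:ℝ)^Emax * (2:ℝ)^((k:ℤ) - (j:ℤ)) else 0))
            + 2 * (if s k then (2:ℝ)^Emax else 0) := by
        rw [Finset.sum_range_succ, Finset.mul_sum]
        congr 1
        · refine Finset.sum_congr rfl fun j _ => ?_
          rw [show ((k+1:ℕ):ℤ) - (j:ℤ) = ((k:ℤ) - (j:ℤ)) + 1 by push_cast; ring, zadd]
          split_ifs <;> ring
        · rw [show ((k+1:ℕ):ℤ) - (k:ℤ) = 1 by push_cast; ring, zpow_one]
          split_ifs <;> ring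
      rw [hu k, ih, hA2, hB2]
      ring
  -- inputs vanish after the input window
  have hIzero : ∀ k, Tin ≤ k → I k = 0 := by
    intro k hk
    rw [hI]
    apply Finset.sum_eq_zero
    intro i _
    rw [if_neg]
    intro hmem
    have := Finset.mem_range.mp (hF i hmem)
    omega
  -- the output partial sums
  set S : ℕ → ℝ := fun m => ∑ l ∈ Finset.range m,
    (if s (N + l) then (2:ℝ)^(Emax - (l:ℤ)) else 0) with hS
  have hSsucc : ∀ m, S (m+1) = S m + (if s (N + m) then (2:ℝ)^(Emax - (m:ℤ)) else 0) := by
    intro m; simp only [hS]; exact Finset.sum_range_succ _ m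
  -- potential in the output window
  have keyN : ∀ m, u (N + m) = (2:ℝ)^(m:ℤ) * (A - S m) := by
    intro m
    simp only [hS]
    rw [key (N + m)]
    have hfirst : ∑ j ∈ Finset.range (N + m + 1),
        (2:ℝ)^e0min * I j * (2:ℝ)^(((N+m:ℕ):ℤ) - (j:ℤ))
        = (2:ℝ)^(m:ℤ) * A := by
      have hstep : ∑ j ∈ Finset.range Tin,
          (2:ℝ)^e0min * I j * (2:ℝ)^(((N+m:ℕ):ℤ) - (j:ℤ))
          = ∑ j ∈ Finset.range (N + m + 1),
          (2:ℝ)^e0min * I j * (2:ℝ)^(((N+m:ℕ):ℤ) - (j:ℤ)) := by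
        refine Finset.sum_subset (Finset.range_subset_range.mpr (by omega)) fun j _ hj => ?_
        rw [hIzero j (Nat.le_of_not_lt (by simpa using hj))]
        simp
      rw [← hstep, hA, Finset.mul_sum]
      have swap : ∑ j ∈ Finset.range Tin,
          (2:ℝ)^e0min * I j * (2:ℝ)^(((N+m:ℕ):ℤ) - (j:ℤ))
          = ∑ i, ∑ j ∈ Finset.range Tin,
            (if j ∈ F i then (2:ℝ)^e0min * w i * (2:ℝ)^(((N+m:ℕ):ℤ) - (j:ℤ)) else 0) := by
        rw [Finset.sum_comm]
        refine Finset.sum_congr rfl fun j _ => ?_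
        rw [hI j, Finset.mul_sum, Finset.sum_mul]
        refine Finset.sum_congr rfl fun i _ => ?_
        split_ifs <;> ring
      rw [swap]
      refine Finset.sum_congr rfl fun i _ => ?_
      rw [Finset.sum_ite_mem, Finset.inter_eq_right.mpr (hF i)]
      simp only [Finset.mul_sum]
      refine Finset.sum_congr rfl fun t ht => ?_
      have hh : (2:ℝ)^e0min * (2:ℝ)^(((N+m:ℕ):ℤ) - (t:ℤ))
          = (2:ℝ)^((m:ℤ)) * (2:ℝ)^(e0max - (t:ℤ)) := by
        rw [← zadd, ← zadd]
        congr 1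
        push_cast
        omega
      linear_combination (w i) * hh
    have hsecond : ∑ j ∈ Finset.range (N + m),
        (if s j then (2:ℝ)^Emax * (2:ℝ)^(((N+m:ℕ):ℤ) - (j:ℤ)) else 0)
        = (2:ℝ)^(m:ℤ) * ∑ l ∈ Finset.range m,
          (if s (N + l) then (2:ℝ)^(Emax - (l:ℤ)) else 0) := by
      rw [Finset.sum_range_add]
      have hz : ∑ j ∈ Finset.range N,
          (if s j then (2:ℝ)^Emax * (2:ℝ)^(((N+m:ℕ):ℤ) - (j:ℤ)) else 0) = 0 := by
        apply Finset.sum_eq_zero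
        intro j hj
        rw [hearly j (Finset.mem_range.mp hj)]
        simp
      rw [hz, zero_add, Finset.mul_sum]
      refine Finset.sum_congr rfl fun l _ => ?_
      rw [mul_ite, mul_zero]
      congr 1
      rw [← zadd, ← zadd]
      congr 1
      push_cast
      ring
    rw [hfirst, hsecond]
    ring
  -- threshold condition in terms of A and S
  have hsN : ∀ m, s (N + m) = true ↔ (2:ℝ)^(Emax - (m:ℤ)) ≤ A - S m := by
    intro m
    rw [hs, keyN m]
    have hpow : (0:ℝ) < (2:ℝ)^(m:ℤ) := zpow_pos h2p _
    have hsplit : (2:ℝ)^Emax = (2:ℝ)^(m:ℤ) * (2:ℝ)^(Emax - (m:ℤ)) := by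
      rw [← zadd]; congr 1; ring
    rw [hsplit]
    constructor
    · intro h; nlinarith
    · intro h; nlinarith
  -- rewrite the goal sum
  have hup : Tin + Tout - 2 + 1 = N + Tout := by omega
  have hgoal : ∑ k ∈ Finset.Icc N (Tin + Tout - 2),
      (if s k then (2:ℝ)^(Emax - ((k:ℤ) - ((Tin:ℤ) - 1))) else 0) = S Tout := by
    rw [← Finset.Ico_add_one_right_eq_Icc, hup, Finset.sum_Ico_eq_sum_range,
      show N + Tout - N = Tout by omega]
    simp only [hS]
    refine Finset.sum_congr rfl fun l _ => ?_
    congr 2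
    push_cast
    omega
  rw [hgoal]
  have hEmin : Emax + 1 - (Tout:ℤ) = Emin := by omega
  rcases lt_or_ge A ((2:ℝ)^Emin) with hlow | hge
  · -- A < 2^Emin : no spikes at all
    have hall : ∀ m, m < Tout → S m = 0 ∧ s (N + m) = false := by
      intro m
      induction m with
      | zero =>
        intro _
        have hS0 : S 0 = 0 := by simp [hS]
        refine ⟨hS0, ?_⟩
        rw [Bool.eq_false_iff]
        intro hc
        have h1 := (hsN 0).mp hc
        rw [hS0] at h1
        have h3 : (2:ℝ)^Emin ≤ (2:ℝ)^(Emax - ((0:ℕ):ℤ)) :=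
          zpow_le_zpow_right₀ one_le_two (by push_cast; omega)
        linarith
      | succ m ih =>
        intro hm
        obtain ⟨hSm, hsm⟩ := ih (by omega)
        have hSm1 : S (m+1) = 0 := by rw [hSsucc, hSm, hsm]; simp
        refine ⟨hSm1, ?_⟩
        rw [Bool.eq_false_iff]
        intro hc
        have h1 := (hsN (m+1)).mp hc
        rw [hSm1] at h1
        have h3 : (2:ℝ)^Emin ≤ (2:ℝ)^(Emax - ((m+1:ℕ):ℤ)) :=
          zpow_le_zpow_right₀ one_le_two (by push_cast; omega)
        linarith
    have hStot : S Tout = 0 := by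
      simp only [hS]
      apply Finset.sum_eq_zero
      intro l hl
      rw [(hall l (Finset.mem_range.mp hl)).2]
      simp
    have hmax : max A 0 < (2:ℝ)^Emin := max_lt hlow (zpow_pos h2p Emin)
    rw [hStot, MLA, if_pos hmax]
  · rcases lt_or_ge A ((2:ℝ)^(Emax+1)) with hmid | hhigh
    · -- middle case: greedy expansion
      have H : ∀ m, m ≤ Tout →
          (∃ n : ℤ, S m = (n:ℝ) * (2:ℝ)^(Emax + 1 - (m:ℤ))) ∧
          S m ≤ A ∧ A < S m + (2:ℝ)^(Emax + 1 - (m:ℤ)) := by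
        intro m
        induction m with
        | zero =>
          intro _
          have hS0 : S 0 = 0 := by simp [hS]
          have hp : (0:ℝ) < (2:ℝ)^Emin := zpow_pos h2p Emin
          refine ⟨⟨0, by rw [hS0]; simp⟩, by rw [hS0]; linarith, ?_⟩
          rw [hS0]
          simpa using hmid
        | succ m ih =>
          intro hm
          obtain ⟨⟨n, hn⟩, hle, hlt⟩ := ih (by omega)
          have hsplit : (2:ℝ)^(Emax + 1 - (m:ℤ)) = 2 * (2:ℝ)^(Emax + 1 - ((m+1:ℕ):ℤ)) := by
            rw [show Emax + 1 - (m:ℤ) = (Emax + 1 - ((m+1:ℕ):ℤ)) + 1 by push_cast; ring, zadd]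
            ring
          have hEm : Emax - (m:ℤ) = Emax + 1 - ((m+1:ℕ):ℤ) := by push_cast; ring
          by_cases hb : s (N + m) = true
          · have hfi := (hsN m).mp hb
            rw [hEm] at hfi
            have hS1 : S (m+1) = S m + (2:ℝ)^(Emax + 1 - ((m+1:ℕ):ℤ)) := by
              rw [hSsucc, hb, if_pos rfl, hEm]
            refine ⟨⟨2*n + 1, ?_⟩, ?_, ?_⟩
            · rw [hS1, hn, hsplit]; push_cast; ring
            · rw [hS1]; linarith
            · rw [hS1]; rw [hsplit] at hlt; linarith
          · rw [Bool.not_eq_true] at hb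
            have hfi : A - S m < (2:ℝ)^(Emax - (m:ℤ)) := by
              by_contra hc
              rw [not_lt] at hc
              have := (hsN m).mpr hc
              rw [hb] at this
              exact Bool.false_ne_true this
            rw [hEm] at hfi
            have hS1 : S (m+1) = S m := by rw [hSsucc, hb]; simp
            refine ⟨⟨2*n, ?_⟩, ?_, ?_⟩
            · rw [hS1, hn, hsplit]; push_cast; ring
            · rw [hS1]; exact hle
            · rw [hS1]; linarith
      obtain ⟨⟨n, hn⟩, hle, hlt⟩ := H Tout le_rfl
      rw [hEmin] at hn hlt
      have hp : (0:ℝ) < (2:ℝ)^Emin := zpow_pos h2p Emin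
      have hAp : 0 ≤ A := le_trans (le_of_lt hp) hge
      have hmax : max A 0 = A := max_eq_left hAp
      have hfl : ⌊A / (2:ℝ)^Emin⌋ = n := by
        rw [Int.floor_eq_iff]
        constructor
        · rw [le_div_iff₀ hp]; linarith
        · rw [div_lt_iff₀ hp]; push_cast; linarith
      rw [MLA, hmax, if_neg (not_lt.mpr hge), if_pos hmid, hfl]
      exact hn
    · -- A ≥ 2^(Emax+1): all spikes fire
      have H : ∀ m, m ≤ Tout → S m = (2:ℝ)^(Emax+1) - (2:ℝ)^(Emax + 1 - (m:ℤ)) := by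
        intro m
        induction m with
        | zero => intro _; simp [hS]
        | succ m ih =>
          intro hm
          have hSm := ih (by omega)
          have hsplit : (2:ℝ)^(Emax + 1 - (m:ℤ)) = 2 * (2:ℝ)^(Emax + 1 - ((m+1:ℕ):ℤ)) := by
            rw [show Emax + 1 - (m:ℤ) = (Emax + 1 - ((m+1:ℕ):ℤ)) + 1 by push_cast; ring, zadd]
            ring
          have hEm : Emax - (m:ℤ) = Emax + 1 - ((m+1:ℕ):ℤ) := by push_cast; ring
          have hb : s (N + m) = true := by
            rw [hsN m, hSm, hEm, hsplit]
            have hp : (0:ℝ) < (2:ℝ)^(Emax + 1 - ((m+1:ℕ):ℤ)) := zpow_pos h2p _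
            linarith
          rw [hSsucc, hb, if_pos rfl, hSm, hEm, hsplit]
          ring
      have hStot := H Tout le_rfl
      rw [hEmin] at hStot
      have hAp : 0 ≤ A := le_trans (le_of_lt (zpow_pos h2p (Emax+1))) hhigh
      have hmax : max A 0 = A := max_eq_left hAp
      rw [MLA, hmax, if_neg (not_lt.mpr hge), if_neg (not_lt.mpr hhigh), hStot]
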